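/- For every M ≥ 1 there exist δ₀ > 0 and C > 0 (depending on N, q, M) such that: if f : S^N → ℝ is Lipschitz with constant at most M and ‖f‖_{L^∞(S^N)} ≤ δ₀, then ‖f‖_{L^∞(S^N)} ≤ C ‖f‖_{L^q(S^N)}^{2/(N+2-2s)}, where q = 2N/(N-2s). -/

import Mathlib

open MeasureTheory Metric Pointwise
open scoped ENNReal

lemma incl_aux (N : ℕ) (r : ℝ) (hr0 : 0 < r) (hr1 : r ≤ 1)
    (y : EuclideanSpace ℝ (Fin (N+1)))
    (ha : y 0 ∈ Set.Icc (3/5 : ℝ) (4/5))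
    (hm : ∑ j : Fin N, (y j.succ)^2 ≤ (r/2)^2) :
    ∃ t ∈ Set.Ioo (0:ℝ) 1, ∃ u : EuclideanSpace ℝ (Fin (N+1)),
      ‖u‖ = 1 ∧ ‖u - EuclideanSpace.single 0 1‖ ≤ r ∧ t • u = y := by
  obtain ⟨ha1, ha2⟩ := ha
  set a := y 0 with hay
  set m2 := ∑ j : Fin N, (y j.succ)^2 with hm2
  have hm2nn : 0 ≤ m2 := Finset.sum_nonneg fun j _ => sq_nonneg _
  set t := ‖y‖ with hty
  have htsq : t^2 = a^2 + m2 := by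
    rw [hty, EuclideanSpace.norm_eq, Real.sq_sqrt (Finset.sum_nonneg fun i _ => sq_nonneg _)]
    rw [Fin.sum_univ_succ]
    simp [Real.norm_eq_abs, sq_abs, hm2, hay]
  have htnn : 0 ≤ t := norm_nonneg _
  have hta : a ≤ t := by nlinarith
  have ht0 : 0 < t := by linarith
  have ht1 : t < 1 := by nlinarith
  refine ⟨t, ⟨ht0, ht1⟩, t⁻¹ • y, ?_, ?_, ?_⟩
  · rw [norm_smul, norm_inv, Real.norm_eq_abs, abs_of_pos ht0, ← hty, inv_mul_cancel₀ ht0.ne']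
  · have hcoord : ∀ i, (t⁻¹ • y - EuclideanSpace.single (0 : Fin (N+1)) (1:ℝ)) i
        = t⁻¹ * y i - (if i = 0 then (1:ℝ) else 0) := by
      intro i
      simp [EuclideanSpace.single_apply]
    have hnsq : ‖t⁻¹ • y - EuclideanSpace.single (0 : Fin (N+1)) (1:ℝ)‖^2
        = (t⁻¹ * a - 1)^2 + t⁻¹^2 * m2 := by
      rw [EuclideanSpace.norm_eq, Real.sq_sqrt (Finset.sum_nonneg fun i _ => sq_nonneg _)]
      rw [Fin.sum_univ_succ]
      simp only [hcoord, Real.norm_eq_abs, sq_abs]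
      simp only [Fin.succ_ne_zero, if_false, if_true, reduceIte]
      rw [hm2, Finset.mul_sum]
      congr 1
      refine Finset.sum_congr rfl fun j _ => ?_
      ring
    have key : (t⁻¹ * a - 1)^2 + t⁻¹^2 * m2 ≤ r^2 := by
      have h1 : (t⁻¹ * a - 1)^2 + t⁻¹^2 * m2 = ((t - a)^2 + m2) / t^2 := by
        field_simp
        ring
      rw [h1, div_le_iff₀ (by positivity)]
      have hmr : m2 ≤ (r/2)^2 := hm
      have hfac : (t - a) * (t + a) = m2 := by nlinarith
      have htA : t - a ≤ m2 := by nlinarith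
      nlinarith [sq_nonneg (t - a), sq_nonneg r]
    have hnn : 0 ≤ ‖t⁻¹ • y - EuclideanSpace.single (0 : Fin (N+1)) (1:ℝ)‖ := norm_nonneg _
    nlinarith [hnsq, key]
  · rw [smul_inv_smul₀ ht0.ne']


lemma cyl_vol (N : ℕ) (ρ : ℝ) (hρ : 0 ≤ ρ) :
    volume {y : EuclideanSpace ℝ (Fin (N+1)) |
        y 0 ∈ Set.Icc (3/5 : ℝ) (4/5) ∧ ∑ j : Fin N, (y j.succ)^2 ≤ ρ^2}
      = ENNReal.ofReal (1/5) * volume (closedBall (0 : EuclideanSpace ℝ (Fin N)) ρ) := by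
  set φ₁ := (MeasurableEquiv.toLp 2 (Fin (N+1) → ℝ)).symm
  set φ₂ := MeasurableEquiv.piFinSuccAbove (fun _ : Fin (N+1) => ℝ) 0
  set φ₃ := Prod.map (id : ℝ → ℝ) ⇑(MeasurableEquiv.toLp 2 (Fin N → ℝ)).symm.symm
  have hT : MeasurePreserving (φ₃ ∘ ⇑φ₂ ∘ ⇑φ₁) volume volume :=
    ((MeasurePreserving.id volume).prod
        (EuclideanSpace.volume_preserving_symm_measurableEquiv_toLp (Fin N)).symm).comp
      ((volume_preserving_piFinSuccAbove (fun _ : Fin (N+1) => ℝ) 0).comp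
        (EuclideanSpace.volume_preserving_symm_measurableEquiv_toLp (Fin (N+1))))
  have hset : {y : EuclideanSpace ℝ (Fin (N+1)) |
        y 0 ∈ Set.Icc (3/5 : ℝ) (4/5) ∧ ∑ j : Fin N, (y j.succ)^2 ≤ ρ^2}
      = (φ₃ ∘ ⇑φ₂ ∘ ⇑φ₁) ⁻¹' ((Set.Icc (3/5 : ℝ) (4/5)) ×ˢ
          (closedBall (0 : EuclideanSpace ℝ (Fin N)) ρ)) := by
    ext y
    have h2 : ((φ₃ ∘ ⇑φ₂ ∘ ⇑φ₁) y).2 = fun j : Fin N => y ((0 : Fin (N+1)).succAbove j) := rfl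
    have h1 : ((φ₃ ∘ ⇑φ₂ ∘ ⇑φ₁) y).1 = y 0 := rfl
    simp only [Set.mem_setOf_eq, Set.mem_preimage, Set.mem_prod, h1, h2,
      mem_closedBall_zero_iff]
    refine and_congr Iff.rfl ?_
    rw [EuclideanSpace.norm_eq, Real.sqrt_le_iff]
    constructor
    · intro h
      refine ⟨hρ, ?_⟩
      calc ∑ i : Fin N, ‖y ((0:Fin (N+1)).succAbove i)‖ ^ 2
          = ∑ j : Fin N, (y j.succ)^2 := by
            refine Finset.sum_congr rfl fun j _ => ?_
            rw [Fin.zero_succAbove, Real.norm_eq_abs, sq_abs]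
        _ ≤ ρ ^ 2 := h
    · rintro ⟨-, h⟩
      calc ∑ j : Fin N, (y j.succ)^2
          = ∑ i : Fin N, ‖y ((0:Fin (N+1)).succAbove i)‖ ^ 2 := by
            refine Finset.sum_congr rfl fun j _ => ?_
            rw [Fin.zero_succAbove, Real.norm_eq_abs, sq_abs]
        _ ≤ ρ ^ 2 := h
  rw [hset, hT.measure_preimage
    ((measurableSet_Icc.prod measurableSet_closedBall)).nullMeasurableSet]
  rw [show (volume : Measure (ℝ × EuclideanSpace ℝ (Fin N))) = Measure.prod volume volume from
      Measure.volume_eq_prod _ _, Measure.prod_prod, Real.volume_Icc]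
  norm_num

lemma cap_vol (N : ℕ) (x₀ : sphere (0 : EuclideanSpace ℝ (Fin (N+1))) 1)
    (r : ℝ) (hr0 : 0 < r) (hr1 : r ≤ 1) :
    ENNReal.ofReal (1/5) * volume (closedBall (0 : EuclideanSpace ℝ (Fin N)) (r/2))
      ≤ (volume : Measure (EuclideanSpace ℝ (Fin (N+1)))).toSphere (closedBall x₀ r) := by
  classical
  set E1 := EuclideanSpace ℝ (Fin (N+1))
  set e₀ : E1 := EuclideanSpace.single (0 : Fin (N+1)) (1:ℝ) with he₀def
  have hx₀ : ‖(x₀ : E1)‖ = 1 := mem_sphere_zero_iff_norm.mp x₀.2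
  have he₀ : ‖e₀‖ = ‖(x₀ : E1)‖ := by
    rw [hx₀, he₀def, EuclideanSpace.norm_single, norm_one]
  set g := Submodule.reflection (Submodule.span ℝ {e₀ - (x₀ : E1)})ᗮ with hgdef
  have hg : g e₀ = (x₀ : E1) := Submodule.reflection_sub he₀
  set Z : Set E1 := {y : E1 |
      y 0 ∈ Set.Icc (3/5 : ℝ) (4/5) ∧ ∑ j : Fin N, (y j.succ)^2 ≤ (r/2)^2} with hZdef
  have hcont : ∀ i : Fin (N+1), Continuous (fun y : E1 => y i) := fun i =>
    (continuous_apply i).comp (PiLp.continuous_ofLp 2 fun _ : Fin (N+1) => ℝ)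
  have hZmeas : MeasurableSet Z := by
    have : Z = (fun y : E1 => y 0) ⁻¹' (Set.Icc (3/5 : ℝ) (4/5)) ∩
        (fun y : E1 => ∑ j : Fin N, (y j.succ)^2) ⁻¹' (Set.Iic ((r/2)^2)) := rfl
    rw [this]
    exact ((isClosed_Icc.preimage (hcont 0)).inter
      (isClosed_Iic.preimage (by
        exact continuous_finset_sum _ fun j _ => (hcont j.succ).pow 2))).measurableSet
  -- image of Z under g is inside the cone over the cap
  have hsub : ⇑g '' Z ⊆ Set.Ioo (0:ℝ) 1 • (Subtype.val '' (closedBall x₀ r : Set (sphere (0:E1) 1))) := by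
    rintro p ⟨y, ⟨hy1, hy2⟩, rfl⟩
    obtain ⟨t, ht, u, hu1, hu2, hu3⟩ := incl_aux N r hr0 hr1 y hy1 hy2
    have hgu : ‖g u‖ = 1 := by rw [g.norm_map]; exact hu1
    refine Set.mem_smul.mpr ⟨t, ht, g u, ?_, ?_⟩
    · refine ⟨⟨g u, mem_sphere_zero_iff_norm.mpr hgu⟩, ?_, rfl⟩
      rw [mem_closedBall, Subtype.dist_eq, dist_eq_norm]
      show ‖g u - (x₀ : E1)‖ ≤ r
      rw [← hg, ← map_sub, g.norm_map]
      exact hu2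
    · rw [← hu3, g.map_smul]
  have himg : volume (⇑g '' Z) = volume Z := by
    have : ⇑g '' Z = ⇑g.symm ⁻¹' Z := by
      ext p
      constructor
      · rintro ⟨y, hy, rfl⟩; simpa using hy
      · intro hp; exact ⟨g.symm p, hp, by simp⟩
    rw [this, g.symm.measurePreserving.measure_preimage hZmeas.nullMeasurableSet]
  have hcap : (volume : Measure E1).toSphere (closedBall x₀ r)
      = (Module.finrank ℝ E1 : ℝ≥0∞) * volume (Set.Ioo (0:ℝ) 1 • (Subtype.val '' (closedBall x₀ r : Set (sphere (0:E1) 1)))) :=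
    Measure.toSphere_apply' _ measurableSet_closedBall
  calc ENNReal.ofReal (1/5) * volume (closedBall (0 : EuclideanSpace ℝ (Fin N)) (r/2))
      = volume Z := (cyl_vol N (r/2) (by linarith)).symm
    _ = volume (⇑g '' Z) := himg.symm
    _ ≤ volume (Set.Ioo (0:ℝ) 1 • (Subtype.val '' (closedBall x₀ r : Set (sphere (0:E1) 1)))) :=
        measure_mono hsub
    _ ≤ (Module.finrank ℝ E1 : ℝ≥0∞) * volume (Set.Ioo (0:ℝ) 1 • (Subtype.val '' (closedBall x₀ r : Set (sphere (0:E1) 1)))) := by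
        refine le_mul_of_one_le_left zero_le ?_
        rw [show Module.finrank ℝ E1 = N + 1 from finrank_euclideanSpace_fin]
        exact_mod_cast Nat.one_le_iff_ne_zero.mpr (Nat.succ_ne_zero N)
    _ = (volume : Measure E1).toSphere (closedBall x₀ r) := hcap.symm

/-- Interpolation inequality on the sphere: for every `M ≥ 1` there exist `δ₀ > 0` and
`C > 0` such that any `M`-Lipschitz `f : S^N → ℝ` with `‖f‖_∞ ≤ δ₀` satisfies
`‖f‖_∞ ≤ C ‖f‖_{L^q}^{2/(N+2-2s)}`, where `q = 2N/(N-2s)`. -/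
theorem stmt_8 (N : ℕ) (s : ℝ) (hs : 0 < s) (hs2 : s < N / 2) (M : ℝ) (hM : 1 ≤ M) :
    ∃ δ₀ > (0 : ℝ), ∃ C > (0 : ℝ),
      ∀ f : sphere (0 : EuclideanSpace ℝ (Fin (N + 1))) 1 → ℝ,
        LipschitzWith (Real.toNNReal M) f →
        (∀ x, |f x| ≤ δ₀) →
        ∀ x, |f x| ≤ C *
          ((∫ y, |f y| ^ (2 * N / (N - 2 * s)) ∂(volume : Measure (EuclideanSpace ℝ (Fin (N + 1)))).toSphere) ^
              ((N - 2 * s) / (2 * N))) ^ (2 / (N + 2 - 2 * s)) := by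
  have hM0 : (0:ℝ) < M := lt_of_lt_of_le one_pos hM
  have hN0 : 0 < (N:ℝ) := by
    have : (0:ℝ) < (N:ℝ)/2 := lt_trans hs hs2
    linarith
  have hNs : 0 < (N:ℝ) - 2*s := by linarith
  have hK0 : 0 < (N:ℝ) + 2 - 2*s := by linarith
  set q : ℝ := 2 * (N:ℝ) / ((N:ℝ) - 2 * s) with hqdef
  have hq0 : 0 < q := by rw [hqdef]; positivity
  set p : ℝ := q + N with hpdef
  have hp0 : 0 < p := by positivity
  have hexp : ((N:ℝ) - 2*s)/(2*(N:ℝ)) * (2/((N:ℝ)+2-2*s)) = 1/p := by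
    rw [hpdef, hqdef]
    rw [div_mul_div_comm, div_eq_div_iff (by positivity) (by positivity)]
    field_simp
    ring
  -- volume of the unit ball in dimension N
  set B := volume (ball (0 : EuclideanSpace ℝ (Fin N)) 1) with hBdef
  have hB0 : 0 < B := measure_ball_pos _ _ one_pos
  have hBlt : B < ⊤ := measure_ball_lt_top
  set vB := B.toReal with hvBdef
  have hvB : 0 < vB := ENNReal.toReal_pos hB0.ne' hBlt.ne
  set c₃ : ℝ := (1/5) * vB / ((4*M)^N * (2:ℝ)^q) with hc₃def
  have hc₃0 : 0 < c₃ := by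
    have h2q : (0:ℝ) < (2:ℝ)^q := Real.rpow_pos_of_pos two_pos q
    positivity
  set C : ℝ := (1/c₃) ^ (1/p) with hCdef
  have hC0 : 0 < C := Real.rpow_pos_of_pos (by positivity) _
  refine ⟨1, one_pos, C, hC0, ?_⟩
  intro f hf hsup x
  have hfc : Continuous f := hf.continuous
  have hgc : Continuous (fun y : sphere (0 : EuclideanSpace ℝ (Fin (N+1))) 1 => |f y| ^ q) :=
    (continuous_abs.comp hfc).rpow_const (fun x => Or.inr hq0.le)
  have integr : Integrable (fun y : sphere (0 : EuclideanSpace ℝ (Fin (N+1))) 1 => |f y| ^ q)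
      (volume : Measure (EuclideanSpace ℝ (Fin (N+1)))).toSphere := by
    rw [← integrableOn_univ]
    exact hgc.continuousOn.integrableOn_compact isCompact_univ
  set A := ∫ y, |f y| ^ q ∂(volume : Measure (EuclideanSpace ℝ (Fin (N + 1)))).toSphere with hAdef
  have hA0 : 0 ≤ A := integral_nonneg fun y => Real.rpow_nonneg (abs_nonneg _) _
  -- maximum point
  haveI : Nonempty (sphere (0 : EuclideanSpace ℝ (Fin (N+1))) 1) :=
    ⟨⟨EuclideanSpace.single 0 1, mem_sphere_zero_iff_norm.mpr
      (by rw [EuclideanSpace.norm_single]; norm_num)⟩⟩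
  obtain ⟨x₀, -, hmax⟩ := isCompact_univ.exists_isMaxOn Set.univ_nonempty
    (continuous_abs.comp hfc).continuousOn
  have hx₀max : ∀ y, |f y| ≤ |f x₀| := fun y => hmax (Set.mem_univ y)
  set δ := |f x₀| with hδdef
  have hδ1 : δ ≤ 1 := hsup x₀
  rcases eq_or_lt_of_le (abs_nonneg (f x₀)) with hδ0 | hδ0
  · -- f ≡ 0
    have : |f x| ≤ 0 := le_trans (hx₀max x) (le_of_eq hδ0.symm)
    refine le_trans this ?_
    exact mul_nonneg hC0.le (Real.rpow_nonneg (Real.rpow_nonneg hA0 _) _)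
  · set r := δ / (2*M) with hrdef
    have hr0 : 0 < r := by positivity
    have hr1 : r ≤ 1 := by
      rw [hrdef, div_le_one (by positivity)]
      nlinarith
    -- lower bound for f on the cap
    have hcapf : ∀ y ∈ closedBall x₀ r, δ/2 ≤ |f y| := by
      intro y hy
      have hd : dist (f x₀) (f y) ≤ M * r := by
        calc dist (f x₀) (f y) ≤ (Real.toNNReal M : ℝ) * dist x₀ y := hf.dist_le_mul x₀ y
          _ = M * dist y x₀ := by
              rw [Real.coe_toNNReal M (le_trans zero_le_one hM), dist_comm]
          _ ≤ M * r := by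
              exact mul_le_mul_of_nonneg_left (mem_closedBall.mp hy) (le_of_lt hM0)
      have hMr : M * r = δ/2 := by rw [hrdef]; field_simp
      have := abs_sub_abs_le_abs_sub (f x₀) (f y)
      rw [← Real.dist_eq] at this
      linarith [hd, this, hMr ▸ hd]
    have hglb : ∀ y ∈ closedBall x₀ r, (δ/2)^q ≤ |f y| ^ q := fun y hy =>
      Real.rpow_le_rpow (by positivity) (hcapf y hy) hq0.le
    -- cap measure lower bound
    set σ := (volume : Measure (EuclideanSpace ℝ (Fin (N + 1)))).toSphere with hσdef
    have hcapμ : (1/5) * (r/2)^N * vB ≤ (σ (closedBall x₀ r)).toReal := by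
      have h1 := cap_vol N x₀ r hr0 hr1
      have h2 : volume (closedBall (0 : EuclideanSpace ℝ (Fin N)) (r/2))
          = ENNReal.ofReal ((r/2)^N) * B := by
        rw [hBdef, Measure.addHaar_closedBall _ _ (by positivity),
          finrank_euclideanSpace_fin]
      have h3 : (ENNReal.ofReal (1/5) * volume (closedBall (0 : EuclideanSpace ℝ (Fin N)) (r/2))).toReal
          = (1/5) * (r/2)^N * vB := by
        rw [h2, ENNReal.toReal_mul, ENNReal.toReal_mul, ENNReal.toReal_ofReal (by norm_num),
          ENNReal.toReal_ofReal (by positivity), hvBdef, mul_assoc]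
      rw [← h3]
      exact ENNReal.toReal_mono (measure_ne_top _ _) h1
    -- integral lower bound
    have hstep1 : (δ/2)^q * (σ (closedBall x₀ r)).toReal
        ≤ ∫ y in closedBall x₀ r, |f y| ^ q ∂σ :=
      setIntegral_ge_of_const_le_real measurableSet_closedBall (measure_ne_top _ _) hglb
        integr.integrableOn
    have hstep2 : ∫ y in closedBall x₀ r, |f y| ^ q ∂σ ≤ A :=
      setIntegral_le_integral integr (Filter.Eventually.of_forall fun y =>
        Real.rpow_nonneg (abs_nonneg _) _)
    have hAbound : c₃ * δ^p ≤ A := by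
      have hδpos : (0:ℝ) < δ := hδ0
      have hkey : (δ/2)^q * ((1/5) * (r/2)^N * vB) = c₃ * δ^p := by
        have e1 : (δ/2)^q = δ^q / (2:ℝ)^q := Real.div_rpow hδpos.le (by norm_num) q
        have e2 : (r/2) = δ / (4*M) := by rw [hrdef, div_div]; ring_nf
        have e3 : δ^q * δ^(N:ℕ) = δ^p := by
          rw [← Real.rpow_natCast δ N, ← Real.rpow_add hδpos, hpdef]
        rw [e1, e2, div_pow, ← e3, hc₃def]
        ring
      calc c₃ * δ^p = (δ/2)^q * ((1/5) * (r/2)^N * vB) := hkey.symm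
        _ ≤ (δ/2)^q * (σ (closedBall x₀ r)).toReal := by
            exact mul_le_mul_of_nonneg_left hcapμ (by positivity)
        _ ≤ A := le_trans hstep1 hstep2
    -- conclusion
    have hfin : C * (c₃ * δ^p) ^ (1/p) = δ := by
      rw [Real.mul_rpow hc₃0.le (Real.rpow_nonneg hδ0.le _),
        ← Real.rpow_mul hδ0.le, mul_one_div_cancel hp0.ne', Real.rpow_one, hCdef,
        ← mul_assoc, ← Real.mul_rpow (by positivity) hc₃0.le,
        one_div_mul_cancel hc₃0.ne', Real.one_rpow, one_mul]
    calc |f x| ≤ δ := hx₀max x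
      _ = C * (c₃ * δ^p) ^ (1/p) := hfin.symm
      _ ≤ C * A ^ (1/p) := by
          refine mul_le_mul_of_nonneg_left ?_ hC0.le
          exact Real.rpow_le_rpow (by positivity) hAbound (by positivity)
      _ = C * (A ^ (((N:ℝ) - 2*s)/(2*(N:ℝ)))) ^ (2/((N:ℝ)+2-2*s)) := by
          rw [← Real.rpow_mul hA0, hexp]
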